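/- Pf_3(A^6) = 10 and Pf_4(A^8) = 35: for k = 2, Pf_m(A^{2m}) = C(2m−1, m). -/

import Mathlib

open Equiv Finset Function

/-- The `r`-th element of the `i`-th block of length `m` in `{0, …, m*n-1}`. -/
def idx (m n : ℕ) (i : Fin n) (r : Fin m) : Fin (m * n) :=
  ⟨i.val * m + r.val, by
    have h1 : i.val * m + m = (i.val + 1) * m := by ring
    have h2 : (i.val + 1) * m ≤ n * m := Nat.mul_le_mul_right m i.isLt
    have h3 : n * m = m * n := Nat.mul_comm n m
    omega⟩

/-- A permutation of `{0, …, m*n-1}` is block-increasing if it is strictly increasing on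
each of the `n` consecutive blocks of length `m`. -/
def BlockIncr (m n : ℕ) (σ : Equiv.Perm (Fin (m * n))) : Prop :=
  ∀ (i : Fin n) (r r' : Fin m), r < r' → σ (idx m n i r) < σ (idx m n i r')

instance (m n : ℕ) : DecidablePred (BlockIncr m n) := fun σ => by
  unfold BlockIncr; infer_instance

/-- The generalized pfaffian `Pf_m` of a tensor with `m*k` indices (grouped in `k` groups of
`m`), each ranging over `{0, …, m*n-1}`:
`(1/n!) Σ ε(σ_1)⋯ε(σ_k) Π_{i=1}^n M_{σ_1((i-1)m+1),…,σ_1(im),…,σ_k((i-1)m+1),…,σ_k(im)}`,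
the sum being over `k`-tuples of block-increasing permutations. -/
noncomputable def Pf (m k n : ℕ) (M : (Fin k → Fin m → Fin (m * n)) → ℚ) : ℚ :=
  (n.factorial : ℚ)⁻¹ *
    ∑ σ ∈ Finset.univ.filter (fun σ : Fin k → Equiv.Perm (Fin (m * n)) =>
        ∀ j, BlockIncr m n (σ j)),
      (∏ j, ((Equiv.Perm.sign (σ j) : ℤ) : ℚ)) *
        ∏ i : Fin n, M (fun j r => σ j (idx m n i r))

/-- The block number of position `t` in `{0, …, m*n-1}`. -/
def blkOf (m n : ℕ) (t : Fin (m * n)) : Fin n :=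
  ⟨t.val / m, Nat.div_lt_of_lt_mul t.isLt⟩

/-- The position within its block of position `t` in `{0, …, m*n-1}`. -/
def posOf (m n : ℕ) (t : Fin (m * n)) : Fin m :=
  ⟨t.val % m, by
    have hm : 0 < m := by
      rcases Nat.eq_zero_or_pos m with h | h
      · exact absurd t.isLt (by simp [h])
      · exact h
    exact Nat.mod_lt _ hm⟩

/-- The Levi-Civita (fully antisymmetric) tensor of order `m*k` and side `m*k`, with
indices grouped in `k` groups of `m`: its value is the sign of the sequence of indices
read as a permutation when the indices are pairwise distinct, and `0` otherwise. -/
noncomputable def levi (m k : ℕ) : (Fin k → Fin m → Fin (m * k)) → ℚ := fun f =>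
  if h : Function.Bijective (fun t : Fin (m * k) => f (blkOf m k t) (posOf m k t)) then
    ((Equiv.Perm.sign (Equiv.ofBijective _ h) : ℤ) : ℚ)
  else 0

/-- The hyperminor of `M` obtained by restricting the `s`-th group of `m` index slots to
the subset `I s` (of cardinality `m*ℓ`), with the induced order. -/
noncomputable def hyperminor {m k n : ℕ} (ℓ : ℕ) (M : (Fin k → Fin m → Fin (m * n)) → ℚ)
    (I : Fin k → Finset (Fin (m * n))) (h : ∀ s, (I s).card = m * ℓ) :
    (Fin k → Fin m → Fin (m * ℓ)) → ℚ :=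
  fun f => M fun j r => (((I j).orderIsoOfFin (h j)) (f j r)).1

/-- Row `ℓ` of the `(m,k)`-array built from column permutations `σ`: the entry in
column-group `j`, position `r` is `σ j ((ℓ-1)m + r)`. -/
def lqRow (m k : ℕ) (σ : Fin k → Equiv.Perm (Fin (m * k))) (ℓ : Fin k) :
    Fin (m * k) → Fin (m * k) :=
  fun t => σ (blkOf m k t) (idx m k ℓ (posOf m k t))

/-- `σ` determines an `(m,k)`-latin quasisquare: every column permutation `σ j` is
block-increasing and every row is a permutation of `{0, …, mk-1}` (each row is then
automatically block-increasing). -/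
def IsLQ (m k : ℕ) (σ : Fin k → Equiv.Perm (Fin (m * k))) : Prop :=
  (∀ j, BlockIncr m k (σ j)) ∧ ∀ ℓ : Fin k, Function.Bijective (lqRow m k σ ℓ)

instance (m k : ℕ) : DecidablePred (IsLQ m k) := fun σ => by
  unfold IsLQ lqRow; infer_instance

/-- The set of `(m,k)`-latin quasisquares. -/
noncomputable def LQ (m k : ℕ) : Finset (Fin k → Equiv.Perm (Fin (m * k))) :=
  Finset.univ.filter (IsLQ m k)

/-- The sign of an `(m,k)`-latin quasisquare: the product of the signs of the column
permutations `σ j` and of the signs of the rows. -/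
noncomputable def LQsign (m k : ℕ) (σ : Fin k → Equiv.Perm (Fin (m * k))) : ℚ :=
  if h : ∀ ℓ : Fin k, Function.Bijective (lqRow m k σ ℓ) then
    (∏ j, ((Equiv.Perm.sign (σ j) : ℤ) : ℚ)) *
      ∏ ℓ, ((Equiv.Perm.sign (Equiv.ofBijective _ (h ℓ)) : ℤ) : ℚ)
  else 0

section PfAux

open Finset Equiv

variable {m : ℕ}

lemma compl_card {S : Finset (Fin (m * 2))} (hS : S.card = m) : Sᶜ.card = m := by
  rw [Finset.card_compl, Fintype.card_fin, hS]; omega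

/-- The block-increasing map determined by a subset `S` of cardinality `m`. -/
noncomputable def toSfun (m : ℕ) (S : Finset (Fin (m * 2))) (hS : S.card = m) :
    Fin (m * 2) → Fin (m * 2) := fun t =>
  if h : t.val < m then S.orderEmbOfFin hS ⟨t.val, h⟩
  else Sᶜ.orderEmbOfFin (compl_card hS) ⟨t.val - m, by have := t.isLt; omega⟩

lemma toSfun_inj (m : ℕ) (S : Finset (Fin (m * 2))) (hS : S.card = m) :
    Function.Injective (toSfun m S hS) := by
  intro t u htu
  unfold toSfun at htu
  split_ifs at htu with h1 h2 h2
  · have h3 := (S.orderEmbOfFin hS).injective htu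
    have h4 := congrArg Fin.val h3
    exact Fin.ext h4
  · exfalso
    have ha : S.orderEmbOfFin hS ⟨t.val, h1⟩ ∈ S := Finset.orderEmbOfFin_mem _ _ _
    rw [htu] at ha
    exact (Finset.mem_compl.mp (Finset.orderEmbOfFin_mem _ _ _)) ha
  · exfalso
    have ha : S.orderEmbOfFin hS ⟨u.val, h2⟩ ∈ S := Finset.orderEmbOfFin_mem _ _ _
    rw [← htu] at ha
    exact (Finset.mem_compl.mp (Finset.orderEmbOfFin_mem _ _ _)) ha
  · have h3 := (Sᶜ.orderEmbOfFin (compl_card hS)).injective htu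
    have h4 := congrArg Fin.val h3
    simp only at h4
    exact Fin.ext (by omega)

/-- The block-increasing permutation determined by a subset `S` of cardinality `m`. -/
noncomputable def permS (m : ℕ) (S : Finset (Fin (m * 2))) : Equiv.Perm (Fin (m * 2)) :=
  if hS : S.card = m then
    Equiv.ofBijective (toSfun m S hS)
      ((Finite.injective_iff_bijective).mp (toSfun_inj m S hS))
  else 1

lemma permS_apply_lt {S : Finset (Fin (m * 2))} (hS : S.card = m) {t : Fin (m * 2)}
    (h : t.val < m) : permS m S t = S.orderEmbOfFin hS ⟨t.val, h⟩ := by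
  simp only [permS, dif_pos hS]
  show toSfun m S hS t = _
  unfold toSfun
  rw [dif_pos h]

lemma permS_apply_ge {S : Finset (Fin (m * 2))} (hS : S.card = m) {t : Fin (m * 2)}
    (h : ¬ t.val < m) :
    permS m S t = Sᶜ.orderEmbOfFin (compl_card hS) ⟨t.val - m, by have := t.isLt; omega⟩ := by
  simp only [permS, dif_pos hS]
  show toSfun m S hS t = _
  unfold toSfun
  rw [dif_neg h]

lemma idx0_val (r : Fin m) : (idx m 2 0 r).val = r.val := by
  simp [idx]

lemma idx1_val (r : Fin m) : (idx m 2 1 r).val = m + r.val := by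
  simp [idx]

lemma permS_idx0 {S : Finset (Fin (m * 2))} (hS : S.card = m) (r : Fin m) :
    permS m S (idx m 2 0 r) = S.orderEmbOfFin hS r := by
  rw [permS_apply_lt hS (t := idx m 2 0 r) (by rw [idx0_val]; exact r.isLt)]
  congr 1
  exact Fin.ext (idx0_val r)

lemma permS_idx1 {S : Finset (Fin (m * 2))} (hS : S.card = m) (r : Fin m) :
    permS m S (idx m 2 1 r) = Sᶜ.orderEmbOfFin (compl_card hS) r := by
  rw [permS_apply_ge hS (t := idx m 2 1 r) (by rw [idx1_val]; omega)]
  congr 1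
  exact Fin.ext (by simp [idx1_val])

lemma blockIncr_permS {S : Finset (Fin (m * 2))} (hS : S.card = m) :
    BlockIncr m 2 (permS m S) := by
  intro i r r' hrr'
  fin_cases i
  · show permS m S (idx m 2 0 r) < permS m S (idx m 2 0 r')
    rw [permS_idx0 hS, permS_idx0 hS]
    exact (S.orderEmbOfFin hS).strictMono hrr'
  · show permS m S (idx m 2 1 r) < permS m S (idx m 2 1 r')
    rw [permS_idx1 hS, permS_idx1 hS]
    exact (Sᶜ.orderEmbOfFin (compl_card hS)).strictMono hrr'

/-- The image of the first block. -/
def blockSet (m : ℕ) (σ : Equiv.Perm (Fin (m * 2))) : Finset (Fin (m * 2)) :=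
  Finset.univ.image (fun r : Fin m => σ (idx m 2 0 r))

lemma card_blockSet (σ : Equiv.Perm (Fin (m * 2))) : (blockSet m σ).card = m := by
  rw [blockSet, Finset.card_image_of_injective _ (fun r r' h => by
    have h2 := congrArg Fin.val (σ.injective h)
    rw [idx0_val, idx0_val] at h2
    exact Fin.ext h2), card_univ, Fintype.card_fin]

lemma blockSet_permS {S : Finset (Fin (m * 2))} (hS : S.card = m) :
    blockSet m (permS m S) = S := by
  ext x
  simp only [blockSet, Finset.mem_image, Finset.mem_univ, true_and]
  constructor
  · rintro ⟨r, rfl⟩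
    rw [permS_idx0 hS]
    exact Finset.orderEmbOfFin_mem S hS r
  · intro hx
    have hx2 : x ∈ Set.range (S.orderEmbOfFin hS) := by
      rw [Finset.range_orderEmbOfFin]; exact hx
    obtain ⟨r, hr⟩ := hx2
    exact ⟨r, by rw [permS_idx0 hS, hr]⟩

lemma blockIncr_eq_permS (hm : 0 < m) {σ : Equiv.Perm (Fin (m * 2))}
    (hσ : BlockIncr m 2 σ) : σ = permS m (blockSet m σ) := by
  have hS : (blockSet m σ).card = m := card_blockSet σ
  have h0 : (fun r : Fin m => σ (idx m 2 0 r)) = ⇑((blockSet m σ).orderEmbOfFin hS) :=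
    Finset.orderEmbOfFin_unique hS
      (fun r => Finset.mem_image.mpr ⟨r, Finset.mem_univ r, rfl⟩)
      (fun r r' h => hσ 0 r r' h)
  have h1 : (fun r : Fin m => σ (idx m 2 1 r)) =
      ⇑((blockSet m σ)ᶜ.orderEmbOfFin (compl_card hS)) :=
    Finset.orderEmbOfFin_unique (compl_card hS)
      (fun r => by
        rw [Finset.mem_compl]
        intro hmem
        obtain ⟨r', -, hr'⟩ := Finset.mem_image.mp hmem
        have h2 := congrArg Fin.val (σ.injective hr')
        rw [idx0_val, idx1_val] at h2
        omega)
      (fun r r' h => hσ 1 r r' h)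
  apply Equiv.ext
  intro t
  by_cases h : t.val < m
  · have ht : idx m 2 0 ⟨t.val, h⟩ = t := Fin.ext (idx0_val _)
    have h5 := congrFun h0 ⟨t.val, h⟩
    rw [ht] at h5
    rw [permS_apply_lt hS h]
    exact h5
  · have ht : idx m 2 1 ⟨t.val - m, by have := t.isLt; omega⟩ = t := by
      apply Fin.ext; rw [idx1_val]; simp; omega
    have h5 := congrFun h1 ⟨t.val - m, by have := t.isLt; omega⟩
    rw [permS_apply_ge hS h]
    exact (congrArg (⇑σ) ht.symm).trans h5

lemma blkOf_lt {t : Fin (m * 2)} (h : t.val < m) : blkOf m 2 t = 0 := by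
  apply Fin.ext
  show t.val / m = 0
  exact Nat.div_eq_of_lt h

lemma blkOf_ge {t : Fin (m * 2)} (h : ¬ t.val < m) : blkOf m 2 t = 1 := by
  apply Fin.ext
  show t.val / m = 1
  have := t.isLt
  exact Nat.div_eq_of_lt_le (by omega) (by omega)

lemma posOf_lt {t : Fin (m * 2)} (h : t.val < m) : posOf m 2 t = ⟨t.val, h⟩ := by
  apply Fin.ext
  show t.val % m = t.val
  exact Nat.mod_eq_of_lt h

lemma posOf_ge {t : Fin (m * 2)} (h : ¬ t.val < m) :
    posOf m 2 t = ⟨t.val - m, by have := t.isLt; omega⟩ := by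
  apply Fin.ext
  show t.val % m = t.val - m
  have ht := t.isLt
  rw [Nat.mod_eq_sub_mod (by omega)]
  exact Nat.mod_eq_of_lt (by omega)

lemma row0_eq (hm : 0 < m) {S : Finset (Fin (m * 2))} (hS : S.card = m)
    (σ : Fin 2 → Equiv.Perm (Fin (m * 2))) (h0 : σ 0 = permS m S) (h1 : σ 1 = permS m Sᶜ) :
    (fun t => σ (blkOf m 2 t) (idx m 2 0 (posOf m 2 t))) = ⇑(permS m S) := by
  funext t
  by_cases h : t.val < m
  · rw [blkOf_lt h, posOf_lt h, h0]
    congr 1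
    exact Fin.ext (idx0_val _)
  · rw [blkOf_ge h, posOf_ge h, h1, permS_idx0 (compl_card hS), permS_apply_ge hS h]
  
lemma row1_eq (hm : 0 < m) {S : Finset (Fin (m * 2))} (hS : S.card = m)
    (σ : Fin 2 → Equiv.Perm (Fin (m * 2))) (h0 : σ 0 = permS m S) (h1 : σ 1 = permS m Sᶜ) :
    (fun t => σ (blkOf m 2 t) (idx m 2 1 (posOf m 2 t))) = ⇑(permS m Sᶜ) := by
  funext t
  by_cases h : t.val < m
  · rw [blkOf_lt h, posOf_lt h, h0, permS_idx1 hS, permS_apply_lt (compl_card hS) h]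
  · rw [blkOf_ge h, posOf_ge h, h1]
    congr 1
    apply Fin.ext
    rw [idx1_val]
    have := t.isLt
    simp
    omega

lemma bij_row0 (hm : 0 < m) {σ : Fin 2 → Equiv.Perm (Fin (m * 2))}
    (hB : ∀ j, BlockIncr m 2 (σ j))
    (hrow : Function.Bijective (fun t => σ (blkOf m 2 t) (idx m 2 0 (posOf m 2 t)))) :
    σ 1 = permS m (blockSet m (σ 0))ᶜ := by
  have key : blockSet m (σ 1) = (blockSet m (σ 0))ᶜ := by
    apply Finset.eq_of_subset_of_card_le
    · intro x hx
      rw [Finset.mem_compl]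
      obtain ⟨r', -, hr'⟩ := Finset.mem_image.mp hx
      intro hx1
      obtain ⟨r, -, hr⟩ := Finset.mem_image.mp hx1
      have e1 : (fun t => σ (blkOf m 2 t) (idx m 2 0 (posOf m 2 t))) (idx m 2 0 r) = x := by
        show σ (blkOf m 2 (idx m 2 0 r)) (idx m 2 0 (posOf m 2 (idx m 2 0 r))) = x
        rw [blkOf_lt (by rw [idx0_val]; exact r.isLt),
          posOf_lt (by rw [idx0_val]; exact r.isLt)]
        rw [← hr]
        congr 1
        exact Fin.ext (idx0_val _)
      have e2 : (fun t => σ (blkOf m 2 t) (idx m 2 0 (posOf m 2 t))) (idx m 2 1 r') = x := by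
        show σ (blkOf m 2 (idx m 2 1 r')) (idx m 2 0 (posOf m 2 (idx m 2 1 r'))) = x
        rw [blkOf_ge (by rw [idx1_val]; omega), posOf_ge (by rw [idx1_val]; omega)]
        rw [← hr']
        congr 1
        apply Fin.ext
        rw [idx0_val, idx0_val]
        simp [idx1_val]
      have e3 := hrow.injective (e1.trans e2.symm)
      have e4 := congrArg Fin.val e3
      rw [idx0_val, idx1_val] at e4
      omega
    · rw [card_blockSet, compl_card (card_blockSet (σ 0))]
  rw [← key]
  exact blockIncr_eq_permS hm (hB 1)

lemma ofBijective_coe {α : Type*} (e : Equiv.Perm α) (h : Function.Bijective ⇑e) :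
    Equiv.ofBijective ⇑e h = e := Equiv.ext fun _ => rfl

lemma sign_sq {α : Type*} [DecidableEq α] [Fintype α] (τ : Equiv.Perm α) :
    ((Equiv.Perm.sign τ : ℤ) : ℚ) * ((Equiv.Perm.sign τ : ℤ) : ℚ) = 1 := by
  rcases Int.units_eq_one_or (Equiv.Perm.sign τ) with h | h <;> rw [h] <;> norm_num

/-- The pair of permutations attached to a subset `S`. -/
noncomputable def pairFun (m : ℕ) (S : Finset (Fin (m * 2))) :
    Fin 2 → Equiv.Perm (Fin (m * 2)) :=
  fun j => if j = 0 then permS m S else permS m Sᶜ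

lemma pairFun_zero (S : Finset (Fin (m * 2))) : pairFun m S 0 = permS m S := rfl

lemma pairFun_one (S : Finset (Fin (m * 2))) : pairFun m S 1 = permS m Sᶜ := by
  simp [pairFun]

lemma choose_double (hm : 0 < m) : (m * 2).choose m = 2 * ((2 * m - 1).choose m) := by
  obtain ⟨p, rfl⟩ : ∃ p, m = p + 1 := ⟨m - 1, by omega⟩
  have h1 : (p + 1) * 2 = (2 * p + 1) + 1 := by ring
  have h2 : 2 * (p + 1) - 1 = 2 * p + 1 := by omega
  rw [h1, h2, Nat.choose_succ_succ]
  simp only [Nat.succ_eq_add_one]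
  have h3 : (2 * p + 1).choose p = (2 * p + 1).choose (p + 1) := by
    have h5 := Nat.choose_symm (show p + 1 ≤ 2 * p + 1 by omega)
    have h4 : 2 * p + 1 - (p + 1) = p := by omega
    rw [h4] at h5
    exact h5
  omega

theorem pf_general (m : ℕ) (hm : 0 < m) :
    Pf m 2 2 (levi m 2) = Nat.choose (2 * m - 1) m := by
  classical
  rw [Pf]
  set term : (Fin 2 → Equiv.Perm (Fin (m * 2))) → ℚ := fun σ =>
    (∏ j, ((Equiv.Perm.sign (σ j) : ℤ) : ℚ)) *
      ∏ i : Fin 2, levi m 2 (fun j r => σ j (idx m 2 i r)) with hterm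
  set F : Finset (Fin 2 → Equiv.Perm (Fin (m * 2))) :=
    Finset.univ.filter (fun σ => ∀ j, BlockIncr m 2 (σ j)) with hFdef
  set G : Finset (Fin 2 → Equiv.Perm (Fin (m * 2))) :=
    F.filter (fun σ => σ 1 = permS m (blockSet m (σ 0))ᶜ) with hGdef
  have hzero : ∀ σ ∈ F, σ ∉ G → term σ = 0 := by
    intro σ hF hG
    have hB : ∀ j, BlockIncr m 2 (σ j) := (Finset.mem_filter.mp hF).2
    have hP : ¬ σ 1 = permS m (blockSet m (σ 0))ᶜ := fun h =>
      hG (Finset.mem_filter.mpr ⟨hF, h⟩)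
    have hnb : ¬ Function.Bijective
        (fun t => σ (blkOf m 2 t) (idx m 2 0 (posOf m 2 t))) :=
      fun hb => hP (bij_row0 hm hB hb)
    rw [hterm]
    apply mul_eq_zero_of_right
    apply Finset.prod_eq_zero (Finset.mem_univ (0 : Fin 2))
    simp only [levi]
    rw [dif_neg hnb]
  have hone : ∀ σ ∈ G, term σ = 1 := by
    intro σ hG
    have hF := (Finset.mem_filter.mp hG).1
    have hB : ∀ j, BlockIncr m 2 (σ j) := (Finset.mem_filter.mp hF).2
    have hP : σ 1 = permS m (blockSet m (σ 0))ᶜ := (Finset.mem_filter.mp hG).2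
    set S := blockSet m (σ 0) with hSdef
    have hS : S.card = m := card_blockSet _
    have h0 : σ 0 = permS m S := blockIncr_eq_permS hm (hB 0)
    have l0 : levi m 2 (fun j r => σ j (idx m 2 0 r)) =
        ((Equiv.Perm.sign (permS m S) : ℤ) : ℚ) := by
      simp only [levi]
      rw [show (fun t : Fin (m * 2) => σ (blkOf m 2 t) (idx m 2 0 (posOf m 2 t))) =
        ⇑(permS m S) from row0_eq hm hS σ h0 hP]
      rw [dif_pos (permS m S).bijective, _root_.ofBijective_coe]
    have l1 : levi m 2 (fun j r => σ j (idx m 2 1 r)) =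
        ((Equiv.Perm.sign (permS m Sᶜ) : ℤ) : ℚ) := by
      simp only [levi]
      rw [show (fun t : Fin (m * 2) => σ (blkOf m 2 t) (idx m 2 1 (posOf m 2 t))) =
        ⇑(permS m Sᶜ) from row1_eq hm hS σ h0 hP]
      rw [dif_pos (permS m Sᶜ).bijective, _root_.ofBijective_coe]
    rw [hterm]
    simp only [Fin.prod_univ_two]
    rw [l0, l1, h0, hP]
    set a := ((Equiv.Perm.sign (permS m S) : ℤ) : ℚ)
    set b := ((Equiv.Perm.sign (permS m Sᶜ) : ℤ) : ℚ)
    calc a * b * (a * b) = (a * a) * (b * b) := by ring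
    _ = 1 := by rw [sign_sq, sign_sq, mul_one]
  have hcard : G.card = (m * 2).choose m := by
    have h1 : G.card = (Finset.powersetCard m (Finset.univ : Finset (Fin (m * 2)))).card := by
      apply Finset.card_nbij' (fun σ => blockSet m (σ 0)) (fun S => pairFun m S)
      · intro σ hσ
        rw [Finset.mem_coe, Finset.mem_powersetCard]
        exact ⟨Finset.subset_univ _, card_blockSet _⟩
      · intro S hSmem
        have hS : S.card = m := (Finset.mem_powersetCard.mp hSmem).2
        rw [hGdef, Finset.mem_coe, Finset.mem_filter, hFdef, Finset.mem_filter]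
        beta_reduce
        refine ⟨⟨Finset.mem_univ _, ?_⟩, ?_⟩
        · intro j
          fin_cases j
          · rw [show ((⟨0, by omega⟩ : Fin 2)) = 0 from rfl, pairFun_zero]
            exact blockIncr_permS hS
          · rw [show ((⟨1, by omega⟩ : Fin 2)) = 1 from rfl, pairFun_one]
            exact blockIncr_permS (compl_card hS)
        · rw [pairFun_one, pairFun_zero, blockSet_permS hS]
      · intro σ hσ
        have hF := (Finset.mem_filter.mp hσ).1
        have hB : ∀ j, BlockIncr m 2 (σ j) := (Finset.mem_filter.mp hF).2
        have hP : σ 1 = permS m (blockSet m (σ 0))ᶜ := (Finset.mem_filter.mp hσ).2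
        funext j
        fin_cases j
        · beta_reduce
          rw [show ((⟨0, by omega⟩ : Fin 2)) = 0 from rfl, pairFun_zero]
          exact (blockIncr_eq_permS hm (hB 0)).symm
        · beta_reduce
          rw [show ((⟨1, by omega⟩ : Fin 2)) = 1 from rfl, pairFun_one]
          exact hP.symm
      · intro S hSmem
        have hS : S.card = m := (Finset.mem_powersetCard.mp hSmem).2
        beta_reduce
        rw [pairFun_zero, blockSet_permS hS]
    rw [h1, Finset.card_powersetCard, Finset.card_univ, Fintype.card_fin]
  have key : ∑ σ ∈ F, term σ = ((m * 2).choose m : ℚ) := by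
    rw [← Finset.sum_subset (Finset.filter_subset _ F) hzero,
      Finset.sum_congr rfl hone, Finset.sum_const, hcard, nsmul_eq_mul, mul_one]
  rw [show ∑ σ ∈ Finset.univ.filter
      (fun σ : Fin 2 → Equiv.Perm (Fin (m * 2)) => ∀ j, BlockIncr m 2 (σ j)),
      (∏ j, ((Equiv.Perm.sign (σ j) : ℤ) : ℚ)) *
        ∏ i : Fin 2, levi m 2 (fun j r => σ j (idx m 2 i r)) = ∑ σ ∈ F, term σ from rfl]
  rw [key, choose_double hm]
  have h2 : ((Nat.factorial 2 : ℕ) : ℚ) = 2 := by norm_num [Nat.factorial]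
  rw [h2, Nat.cast_mul, Nat.cast_ofNat]
  ring

end PfAux

/-- `Pf_3(A^6) = 10`, `Pf_4(A^8) = 35`, and in general for `k = 2`,
`Pf_m(A^{2m}) = C(2m-1, m)`. -/


theorem pf_levi_k_two :
    Pf 3 2 2 (levi 3 2) = 10 ∧ Pf 4 2 2 (levi 4 2) = 35 ∧
    ∀ m : ℕ, 0 < m → Pf m 2 2 (levi m 2) = Nat.choose (2 * m - 1) m := by
  refine ⟨?_, ?_, fun m hm => pf_general m hm⟩
  · rw [pf_general 3 (by norm_num)]
    norm_num [Nat.choose]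
  · rw [pf_general 4 (by norm_num)]
    norm_num [Nat.choose]
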